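/- Let R be a complete DVR of mixed characteristic (0,p) with valuation v, v(p)=1, and consider power series in R{T^{−1}}⊗K with the coefficientwise valuation v_ch defined as follows: fix rationals 0 < r_hub < r_crit and s > 0, and for F = Σ_{q<M} c_q p^{q·r_crit} T^{−q} + Σ_{q≥M} c_q p^{s + q·r_hub} T^{−q} set v_ch(F) = min_q v(c_q), where M, s satisfy s = M(r_crit − r_hub). Then v_ch(F_1 F_2) ≥ v_ch(F_1) + v_ch(F_2) for all F_1, F_2. -/

import Mathlib

lemma stmt18_aux {K : Type*} [Field K] (v : K → WithTop ℚ)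
    (hv_add : ∀ x y : K, min (v x) (v y) ≤ v (x + y)) (hv_zero : v 0 = ⊤)
    {ι : Type*} (t : Finset ι) (f : ι → K) (c : WithTop ℚ)
    (h : ∀ i ∈ t, c ≤ v (f i)) : c ≤ v (∑ i ∈ t, f i) := by
  induction t using Finset.cons_induction with
  | empty => simp [hv_zero]
  | cons a t ha ih =>
    rw [Finset.sum_cons]
    refine le_trans ?_ (hv_add _ _)
    exact le_min (h a (Finset.mem_cons_self ..))
      (ih fun i hi => h i (Finset.mem_cons_of_mem hi))

/-- Superadditivity of the crit-hub valuation `v_ch` on products (Lemma `Lcrithub1(ii)`):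
writing `w q = q·r_crit` for `q < M` and `w q = s + q·r_hub` for `q ≥ M`, with
`s = M (r_crit - r_hub)` and `0 < r_hub < r_crit`, a lower bound `β ≤ v_ch(F)` means
`v(coeff q F) ≥ β + w q` for all `q`; then lower bounds for `F₁` and `F₂` add up to a
lower bound for `F₁ F₂`. -/
theorem stmt18 (K : Type*) [Field K] (v : K → WithTop ℚ)
    (hv_mul : ∀ x y : K, v (x * y) = v x + v y)
    (hv_add : ∀ x y : K, min (v x) (v y) ≤ v (x + y))
    (hv_zero : v 0 = ⊤)
    (M : ℕ) (hM : 0 < M) (rcrit rhub s : ℚ)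
    (h1 : 0 < rhub) (h2 : rhub < rcrit) (hs : s = M * (rcrit - rhub))
    (w : ℕ → ℚ) (hw : ∀ q, w q = if q < M then q * rcrit else s + q * rhub)
    (F₁ F₂ : PowerSeries K) (β₁ β₂ : ℚ)
    (hF₁ : ∀ q, ((β₁ + w q : ℚ) : WithTop ℚ) ≤ v (PowerSeries.coeff (R := K) q F₁))
    (hF₂ : ∀ q, ((β₂ + w q : ℚ) : WithTop ℚ) ≤ v (PowerSeries.coeff (R := K) q F₂)) :
    ∀ q, ((β₁ + β₂ + w q : ℚ) : WithTop ℚ) ≤ v (PowerSeries.coeff (R := K) q (F₁ * F₂)) := by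
  -- superadditivity of w
  have hsnn : 0 ≤ s := by
    rw [hs]; have : rcrit - rhub ≥ 0 := by linarith
    positivity
  have hwsup : ∀ i j : ℕ, w (i + j) ≤ w i + w j := by
    intro i j
    rw [hw, hw, hw]
    push_cast
    rcases lt_or_ge i M with hi | hi <;> rcases lt_or_ge j M with hj | hj
    · rcases lt_or_ge (i + j) M with hij | hij
      · rw [if_pos hij, if_pos hi, if_pos hj]; push_cast; ring_nf; rfl
      · rw [if_neg (by omega), if_pos hi, if_pos hj]
        have : (M : ℚ) ≤ (i : ℚ) + j := by exact_mod_cast hij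
        push_cast
        nlinarith [sub_nonneg.mpr h2.le]
    · rw [if_neg (by omega), if_pos hi, if_neg (by omega)]
      push_cast
      nlinarith
    · rw [if_neg (by omega), if_neg (by omega), if_pos hj]
      push_cast
      nlinarith
    · rw [if_neg (by omega), if_neg (by omega), if_neg (by omega)]
      push_cast
      nlinarith [mul_nonneg (Nat.cast_nonneg (α := ℚ) j) h1.le,
        mul_nonneg (Nat.cast_nonneg (α := ℚ) i) h1.le]
  intro q
  rw [PowerSeries.coeff_mul]
  apply stmt18_aux v hv_add hv_zero
  rintro ⟨i, j⟩ hij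
  rw [Finset.HasAntidiagonal.mem_antidiagonal] at hij
  rw [hv_mul]
  calc ((β₁ + β₂ + w q : ℚ) : WithTop ℚ)
      ≤ ((β₁ + w i : ℚ) : WithTop ℚ) + ((β₂ + w j : ℚ) : WithTop ℚ) := by
        rw [← WithTop.coe_add, WithTop.coe_le_coe]
        have := hwsup i j
        rw [hij] at this
        linarith
    _ ≤ _ := add_le_add (hF₁ i) (hF₂ j)
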